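/- In the SFBF setup, suppose the variance is uniformly bounded over the solution set: σ̂(x*) := max{σ(x*), σ₀} ≤ σ̂ for all x* ∈ 𝒳_*. Set a = ᾱ² σ̂² C₂² c₁ (ᾱ = sup_n α_n, c₁ > 1 the constant with κ_n ≤ ᾱ² C₂² c₁(1 + ᾱ² σ̂² C₂²/m_{n+1})). Let φ ∈ (0, (√5 − 1)/2) and n₀ ≥ 1 be such that Σ_{i ≥ n₀} 1/m_{i+1} ≤ φ/a. Then sup_{n ≥ n₀+1} E[dist(X_n, 𝒳_*)²] ≤ (1 + E[dist(X_{n₀}, 𝒳_*)²])/(1 − φ − φ²). -/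

import Mathlib

open MeasureTheory
open scoped RealInnerProductSpace

lemma aux_sum_sq_le (s : Finset ℕ) (f : ℕ → ℝ) (hf : ∀ i, 0 ≤ f i) :
    ∑ i ∈ s, (f i) ^ 2 ≤ (∑ i ∈ s, f i) ^ 2 := by
  induction s using Finset.cons_induction with
  | empty => simp
  | cons i s his ih =>
    rw [Finset.sum_cons, Finset.sum_cons]
    have h1 : 0 ≤ ∑ j ∈ s, f j := Finset.sum_nonneg fun j _ => hf j
    nlinarith [hf i, ih]

lemma aux_seq (D q : ℕ → ℝ) (n₀ : ℕ) (s : ℝ)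
    (hD0 : ∀ n, 0 ≤ D n) (hq0 : ∀ n, 0 ≤ q n)
    (hrec : ∀ n, D (n + 1) ≤ D n + q n * (1 + D n))
    (hsum : ∀ n, ∑ i ∈ Finset.Ico n₀ n, q i ≤ s)
    (hs1 : s < 1) :
    ∀ n, n₀ ≤ n → D n ≤ (1 + D n₀) / (1 - s) := by
  have key : ∀ n, n₀ ≤ n →
      (1 - ∑ i ∈ Finset.Ico n₀ n, q i) * (1 + D n) ≤ 1 + D n₀ := by
    intro n hn
    induction n with
    | zero =>
      have : n₀ = 0 := Nat.le_zero.mp hn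
      subst this; simp
    | succ k ih =>
      rcases Nat.lt_or_ge k n₀ with h | h
      · have hk : n₀ = k + 1 := by omega
        subst hk; simp
      · have ihk := ih h
        have hS : ∑ i ∈ Finset.Ico n₀ (k + 1), q i
            = ∑ i ∈ Finset.Ico n₀ k, q i + q k := Finset.sum_Ico_succ_top h q
        rw [hS]
        set S := ∑ i ∈ Finset.Ico n₀ k, q i with hSdef
        have hS0 : 0 ≤ S := Finset.sum_nonneg fun i _ => hq0 i
        have h1Dk : (0:ℝ) ≤ 1 + D k := by linarith [hD0 k]
        rcases le_or_gt (1 - (S + q k)) 0 with hneg | hpos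
        · have h1D : (0:ℝ) ≤ 1 + D (k + 1) := by linarith [hD0 (k + 1)]
          nlinarith [hD0 n₀, mul_nonneg (neg_nonneg.mpr hneg) h1D]
        · have h2 := mul_le_mul_of_nonneg_left (hrec k) hpos.le
          nlinarith [mul_nonneg (mul_nonneg (hq0 k) (hq0 k)) h1Dk,
            mul_nonneg (mul_nonneg hS0 (hq0 k)) h1Dk]
  intro n hn
  have h1 := key n hn
  have h2 := hsum n
  have hS0 : 0 ≤ ∑ i ∈ Finset.Ico n₀ n, q i := Finset.sum_nonneg fun i _ => hq0 i
  rw [le_div_iff₀ (by linarith)]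
  nlinarith [hD0 n, hD0 n₀]

set_option maxHeartbeats 1000000 in
theorem stmt_15 {d : ℕ} {Ω : Type*} [mΩ : MeasurableSpace Ω]
    (μ : Measure Ω) [IsProbabilityMeasure μ]
    (𝒳 : Set (EuclideanSpace ℝ (Fin d)))
    (h𝒳ne : 𝒳.Nonempty) (h𝒳cl : IsClosed 𝒳) (h𝒳cv : Convex ℝ 𝒳)
    (proj : EuclideanSpace ℝ (Fin d) → EuclideanSpace ℝ (Fin d))
    (hproj_mem : ∀ x, proj x ∈ 𝒳)
    (hproj_char : ∀ x, ∀ y ∈ 𝒳, ⟪x - proj x, y - proj x⟫ ≤ 0)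
    (T : EuclideanSpace ℝ (Fin d) → EuclideanSpace ℝ (Fin d))
    (L : ℝ) (hL : 0 < L)
    (hLip : ∀ x y, ‖T x - T y‖ ≤ L * ‖x - y‖)
    (hpm : ∀ x y, 0 ≤ ⟪T x, y - x⟫ → 0 ≤ ⟪T y, y - x⟫)
    -- the solution set, the projection onto it, and the induced distance
    (Xstar : Set (EuclideanSpace ℝ (Fin d)))
    (hXstar : Xstar = {x | x ∈ 𝒳 ∧ ∀ y ∈ 𝒳, 0 ≤ ⟪T x, y - x⟫})
    (hXstar_ne : Xstar.Nonempty)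
    (projS : EuclideanSpace ℝ (Fin d) → EuclideanSpace ℝ (Fin d))
    (hprojS_mem : ∀ x, projS x ∈ Xstar)
    (hprojS_char : ∀ x, ∀ y ∈ Xstar, ⟪x - projS x, y - projS x⟫ ≤ 0)
    -- uniform variance bound over the solution set
    (σ : EuclideanSpace ℝ (Fin d) → ℝ) (σ₀ σhat : ℝ) (hσ₀ : 0 ≤ σ₀)
    (hσhat : ∀ xs ∈ Xstar, max (σ xs) σ₀ ≤ σhat)
    -- step sizes and batch sizes
    (α : ℕ → ℝ) (αlow αup : ℝ) (hαlow : 0 < αlow) (hαup : Real.sqrt 2 * L * αup < 1)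
    (hα : ∀ n, αlow ≤ α n ∧ α n ≤ αup)
    (mb : ℕ → ℕ) (hmb : ∀ n, 1 ≤ mb n)
    (hmb_sum : Summable fun n => ((mb n : ℝ))⁻¹)
    -- filtration and adapted iterates
    (𝓕 : ℕ → MeasurableSpace Ω) (h𝓕mono : ∀ n, 𝓕 n ≤ 𝓕 (n + 1)) (h𝓕Ω : ∀ n, 𝓕 n ≤ mΩ)
    (X : ℕ → Ω → EuclideanSpace ℝ (Fin d))
    (hXad : ∀ n, StronglyMeasurable[𝓕 n] (X n))
    (hdint : ∀ n, Integrable (fun ω => ‖projS (X n ω) - X n ω‖ ^ 2) μ)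
    (hrint : ∀ n, Integrable
      (fun ω => ‖X n ω - proj (X n ω - α n • T (X n ω))‖ ^ 2) μ)
    -- the distance version of the stochastic quasi-Fejér inequality
    (C₂ c₁ : ℝ) (hC₂ : 0 < C₂) (hc₁ : 1 < c₁)
    (κ : ℕ → ℝ) (hκ0 : ∀ n, 0 ≤ κ n)
    (hFejer : ∀ n, ∀ᵐ ω ∂μ,
      condExp (𝓕 n) μ (fun ω' => ‖projS (X (n + 1) ω') - X (n + 1) ω'‖ ^ 2) ω
        ≤ ‖projS (X n ω) - X n ω‖ ^ 2
          - ((1 - 2 * L ^ 2 * (α n) ^ 2) / 2) *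
              ‖X n ω - proj (X n ω - α n • T (X n ω))‖ ^ 2
          + (κ n * σhat ^ 2 / (mb (n + 1))) * (1 + ‖projS (X n ω) - X n ω‖ ^ 2))
    (hκ : ∀ n, κ n ≤ αup ^ 2 * C₂ ^ 2 * c₁ * (1 + αup ^ 2 * σhat ^ 2 * C₂ ^ 2 / (mb (n + 1))))
    -- the constants `a`, `φ` and `n₀`
    (a φ : ℝ) (n₀ : ℕ) (hn₀1 : 1 ≤ n₀)
    (ha : a = αup ^ 2 * σhat ^ 2 * C₂ ^ 2 * c₁)
    (hφ : 0 < φ ∧ φ < (Real.sqrt 5 - 1) / 2)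
    (hn₀ : ∑' i : ℕ, ((mb (n₀ + i + 1) : ℝ))⁻¹ ≤ φ / a) :
    ∀ n, n₀ + 1 ≤ n →
      ∫ ω, ‖projS (X n ω) - X n ω‖ ^ 2 ∂μ
        ≤ (1 + ∫ ω, ‖projS (X n₀ ω) - X n₀ ω‖ ^ 2 ∂μ) / (1 - φ - φ ^ 2) := by
  obtain ⟨hφ0, hφ1⟩ := hφ
  have hs5 : Real.sqrt 5 ^ 2 = 5 := Real.sq_sqrt (by norm_num)
  have hφφ : φ + φ ^ 2 < 1 := by nlinarith [Real.sqrt_nonneg 5]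
  have hαup0 : 0 < αup := lt_of_lt_of_le hαlow ((hα 0).1.trans (hα 0).2)
  have hσhat0 : 0 ≤ σhat := by
    obtain ⟨xs, hxs⟩ := hXstar_ne
    exact le_trans (le_trans hσ₀ (le_max_right _ _)) (hσhat xs hxs)
  have ha0 : 0 ≤ a := by rw [ha]; positivity
  have hmbpos : ∀ n, (0:ℝ) < (mb n : ℝ) := fun n => by exact_mod_cast hmb n
  set D : ℕ → ℝ := fun n => ∫ ω, ‖projS (X n ω) - X n ω‖ ^ 2 ∂μ with hDdef
  have hD0 : ∀ n, 0 ≤ D n := fun n => integral_nonneg fun ω => by positivity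
  set q : ℕ → ℝ := fun n => κ n * σhat ^ 2 / (mb (n + 1)) with hqdef
  have hq0 : ∀ n, 0 ≤ q n := fun n =>
    div_nonneg (mul_nonneg (hκ0 n) (sq_nonneg _)) (hmbpos _).le
  -- the one-step recursion
  have hrec : ∀ n, D (n + 1) ≤ D n + q n * (1 + D n) := by
    intro n
    have hm := h𝓕Ω n
    set c : ℝ := (1 - 2 * L ^ 2 * (α n) ^ 2) / 2 with hcdef
    have hc0 : 0 ≤ c := by
      have h1 := (hα n).1
      have h2 := (hα n).2
      have h3 : Real.sqrt 2 ^ 2 = 2 := Real.sq_sqrt (by norm_num)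
      have h4 : 0 ≤ Real.sqrt 2 * L * αup := by positivity
      have h5 : 2 * L ^ 2 * αup ^ 2 < 1 := by
        nlinarith [mul_lt_mul'' hαup hαup h4 h4]
      have h0n : 0 < α n := lt_of_lt_of_le hαlow h1
      have h6 : α n ^ 2 ≤ αup ^ 2 := by nlinarith
      have h7 : 2 * L ^ 2 * α n ^ 2 ≤ 2 * L ^ 2 * αup ^ 2 := by nlinarith [sq_nonneg L]
      rw [hcdef]
      linarith
    have hB : Integrable (fun ω => c * ‖X n ω - proj (X n ω - α n • T (X n ω))‖ ^ 2) μ :=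
      (hrint n).const_mul c
    have hone : Integrable (fun ω => 1 + ‖projS (X n ω) - X n ω‖ ^ 2) μ :=
      (integrable_const (1:ℝ)).add (hdint n)
    have hf1 : Integrable (fun ω => ‖projS (X n ω) - X n ω‖ ^ 2
        - c * ‖X n ω - proj (X n ω - α n • T (X n ω))‖ ^ 2) μ := (hdint n).sub hB
    have hf2 : Integrable (fun ω => (κ n * σhat ^ 2 / (mb (n + 1))) *
        (1 + ‖projS (X n ω) - X n ω‖ ^ 2)) μ := hone.const_mul _
    have hgint : Integrable (fun ω => ‖projS (X n ω) - X n ω‖ ^ 2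
        - c * ‖X n ω - proj (X n ω - α n • T (X n ω))‖ ^ 2
        + (κ n * σhat ^ 2 / (mb (n + 1))) * (1 + ‖projS (X n ω) - X n ω‖ ^ 2)) μ :=
      hf1.add hf2
    have h1 : ∫ ω, condExp (𝓕 n) μ
        (fun ω' => ‖projS (X (n + 1) ω') - X (n + 1) ω'‖ ^ 2) ω ∂μ = D (n + 1) :=
      integral_condExp hm
    have h2 : ∫ ω, condExp (𝓕 n) μ
          (fun ω' => ‖projS (X (n + 1) ω') - X (n + 1) ω'‖ ^ 2) ω ∂μ
        ≤ ∫ ω, (‖projS (X n ω) - X n ω‖ ^ 2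
          - c * ‖X n ω - proj (X n ω - α n • T (X n ω))‖ ^ 2
          + (κ n * σhat ^ 2 / (mb (n + 1))) * (1 + ‖projS (X n ω) - X n ω‖ ^ 2)) ∂μ :=
      integral_mono_ae integrable_condExp hgint (hFejer n)
    have h3 : ∫ ω, (‖projS (X n ω) - X n ω‖ ^ 2
          - c * ‖X n ω - proj (X n ω - α n • T (X n ω))‖ ^ 2
          + (κ n * σhat ^ 2 / (mb (n + 1))) * (1 + ‖projS (X n ω) - X n ω‖ ^ 2)) ∂μ
        = D n - c * (∫ ω, ‖X n ω - proj (X n ω - α n • T (X n ω))‖ ^ 2 ∂μ)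
          + q n * (1 + D n) := by
      rw [integral_add hf1 hf2, integral_sub (hdint n) hB,
        integral_const_mul, integral_const_mul,
        integral_add (integrable_const (1:ℝ)) (hdint n), integral_const]
      simp [measure_univ]
      rfl
    have hR0 : 0 ≤ ∫ ω, ‖X n ω - proj (X n ω - α n • T (X n ω))‖ ^ 2 ∂μ :=
      integral_nonneg fun ω => by positivity
    have := h2.trans_eq h3
    rw [h1] at this
    linarith [mul_nonneg hc0 hR0]
  -- bound on the partial sums of `q`
  have hsummable' : Summable (fun i => ((mb (n₀ + i + 1) : ℝ))⁻¹) := by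
    have heq : (fun i => ((mb (n₀ + i + 1) : ℝ))⁻¹)
        = (fun k => ((mb k : ℝ))⁻¹) ∘ (fun i => n₀ + i + 1) := rfl
    rw [heq]
    exact hmb_sum.comp_injective fun i j h => by omega
  have hstep : ∀ i, q i ≤ a * ((mb (i + 1) : ℝ))⁻¹ + a ^ 2 * (((mb (i + 1) : ℝ))⁻¹) ^ 2 := by
    intro i
    have hk := hκ i
    rw [div_eq_mul_inv] at hk
    set v := ((mb (i + 1) : ℝ))⁻¹ with hvdef
    have hv : 0 < v := inv_pos.mpr (hmbpos _)
    have hq' : q i = κ i * σhat ^ 2 * v := by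
      simp only [hqdef]
      rw [div_eq_mul_inv]
    have h1 : κ i * σhat ^ 2 * v
        ≤ (αup ^ 2 * C₂ ^ 2 * c₁ * (1 + αup ^ 2 * σhat ^ 2 * C₂ ^ 2 * v)) * (σhat ^ 2 * v) := by
      rw [mul_assoc]
      exact mul_le_mul_of_nonneg_right hk (mul_nonneg (sq_nonneg σhat) hv.le)
    have h2 : (αup ^ 2 * C₂ ^ 2 * c₁ * (1 + αup ^ 2 * σhat ^ 2 * C₂ ^ 2 * v)) * (σhat ^ 2 * v)
        ≤ a * v + a ^ 2 * v ^ 2 := by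
      rw [ha]
      nlinarith [mul_nonneg (mul_nonneg (by linarith : (0:ℝ) ≤ c₁)
        (by linarith : (0:ℝ) ≤ c₁ - 1)) (sq_nonneg (αup ^ 2 * C₂ ^ 2 * σhat ^ 2 * v))]
    rw [hq']
    exact h1.trans h2
  have hsum : ∀ n, ∑ i ∈ Finset.Ico n₀ n, q i ≤ φ + φ ^ 2 := by
    intro n
    set t := ∑ i ∈ Finset.Ico n₀ n, ((mb (i + 1) : ℝ))⁻¹ with ht
    have ht0 : 0 ≤ t := Finset.sum_nonneg fun i _ => (inv_pos.mpr (hmbpos _)).le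
    have hat : a * t ≤ φ := by
      have h1 : t ≤ ∑' i : ℕ, ((mb (n₀ + i + 1) : ℝ))⁻¹ := by
        rw [ht, Finset.sum_Ico_eq_sum_range]
        exact Summable.sum_le_tsum (Finset.range (n - n₀))
          (fun i _ => (inv_pos.mpr (hmbpos _)).le) hsummable'
      rcases eq_or_lt_of_le ha0 with h | h
      · rw [← h]; simpa using hφ0.le
      · calc a * t ≤ a * (φ / a) :=
              mul_le_mul_of_nonneg_left (h1.trans hn₀) h.le
          _ = φ := by field_simp
    have hsq : ∑ i ∈ Finset.Ico n₀ n, (((mb (i + 1) : ℝ))⁻¹) ^ 2 ≤ t ^ 2 :=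
      aux_sum_sq_le _ _ fun i => (inv_pos.mpr (hmbpos _)).le
    calc ∑ i ∈ Finset.Ico n₀ n, q i
        ≤ ∑ i ∈ Finset.Ico n₀ n,
            (a * ((mb (i + 1) : ℝ))⁻¹ + a ^ 2 * (((mb (i + 1) : ℝ))⁻¹) ^ 2) :=
          Finset.sum_le_sum fun i _ => hstep i
      _ = a * t + a ^ 2 * ∑ i ∈ Finset.Ico n₀ n, (((mb (i + 1) : ℝ))⁻¹) ^ 2 := by
          rw [Finset.sum_add_distrib, ← Finset.mul_sum, ← Finset.mul_sum]
      _ ≤ a * t + a ^ 2 * t ^ 2 := by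
          linarith [mul_le_mul_of_nonneg_left hsq (sq_nonneg a)]
      _ = a * t + (a * t) ^ 2 := by ring
      _ ≤ φ + φ ^ 2 := by nlinarith [mul_nonneg ha0 ht0]
  intro n hn
  have := aux_seq D q n₀ (φ + φ ^ 2) hD0 hq0 hrec hsum hφφ n (by omega)
  calc D n ≤ (1 + D n₀) / (1 - (φ + φ ^ 2)) := this
    _ = (1 + D n₀) / (1 - φ - φ ^ 2) := by ring_nf
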